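/- Formula for the minimal interpolation degree via truncated exponentials: For every finite set S of points in ℝ^s, μ(S) equals the smallest m ∈ ℕ such that the family of polynomials p_z = Σ_{k=0}^{m} (z₁ξ₁+⋯+z_sξ_s)^k, indexed by z = (z₁,…,z_s) ∈ S, is linearly independent in ℝ[ξ₁,…,ξ_s]. -/

import Mathlib

open Finset
open scoped Classical

noncomputable section

namespace MuAux

open MvPolynomial

set_option linter.unusedSectionVars false

variable {s : ℕ}

/-- truncated exponential -/
def truncExp (m : ℕ) (z : Fin s → ℝ) : MvPolynomial (Fin s) ℝ :=
  ∑ k ∈ Finset.range (m + 1), (∑ i, MvPolynomial.C (z i) * MvPolynomial.X i) ^ k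

lemma finsupp_sum_eq (δ : Fin s →₀ ℕ) : (δ.sum fun _ e => e) = ∑ i, δ i :=
  Finsupp.sum_fintype _ _ fun _ => rfl

lemma coeff_linpow (z : Fin s → ℝ) (n : ℕ) (δ : Fin s →₀ ℕ) :
    MvPolynomial.coeff δ
      ((∑ i, MvPolynomial.C (z i) * MvPolynomial.X i : MvPolynomial (Fin s) ℝ) ^ n)
      = if (∑ i, δ i) = n then (Nat.multinomial Finset.univ ⇑δ : ℝ) * ∏ i, z i ^ δ i else 0 := by
  rw [Finset.sum_pow_eq_sum_piAntidiag, MvPolynomial.coeff_sum]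
  have hterm : ∀ k : Fin s → ℕ,
      ((Nat.multinomial Finset.univ k : MvPolynomial (Fin s) ℝ))
          * ∏ i, (MvPolynomial.C (z i) * MvPolynomial.X i) ^ k i
        = MvPolynomial.monomial (Finsupp.equivFunOnFinite.symm k)
            ((Nat.multinomial Finset.univ k : ℝ) * ∏ i, z i ^ k i) := by
    intro k
    have h1 : ∏ i, (MvPolynomial.C (z i) * MvPolynomial.X i : MvPolynomial (Fin s) ℝ) ^ k i
        = MvPolynomial.C (∏ i, z i ^ k i)
            * ∏ i, (MvPolynomial.X i : MvPolynomial (Fin s) ℝ) ^ k i := by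
      simp [mul_pow, Finset.prod_mul_distrib, map_prod]
    have h2 : ∏ i, (MvPolynomial.X i : MvPolynomial (Fin s) ℝ) ^ k i
        = MvPolynomial.monomial (Finsupp.equivFunOnFinite.symm k) (1 : ℝ) := by
      rw [← MvPolynomial.prod_X_pow_eq_monomial]
      refine (Finset.prod_subset (Finset.subset_univ _) ?_).symm
      intro i _ hi
      have : (Finsupp.equivFunOnFinite.symm k) i = 0 := Finsupp.notMem_support_iff.mp hi
      simp only [Finsupp.coe_equivFunOnFinite_symm] at this
      simp [Finsupp.coe_equivFunOnFinite_symm, this]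
    rw [h1, h2]
    rw [← map_natCast (MvPolynomial.C : ℝ →+* MvPolynomial (Fin s) ℝ),
      MvPolynomial.C_mul_monomial, MvPolynomial.C_mul_monomial, mul_one]
  simp only [hterm, MvPolynomial.coeff_monomial]
  have hcond : ∀ k : Fin s → ℕ, (Finsupp.equivFunOnFinite.symm k = δ) ↔ k = ⇑δ := by
    intro k
    rw [Equiv.symm_apply_eq]
    rfl
  simp only [hcond]
  rw [Finset.sum_ite_eq' (Finset.piAntidiag Finset.univ n) (⇑δ)
      (fun k => (Nat.multinomial Finset.univ k : ℝ) * ∏ i, z i ^ k i)]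
  have hmem : (⇑δ ∈ Finset.piAntidiag Finset.univ n) ↔ (∑ i, δ i) = n := by
    simp [Finset.mem_piAntidiag]
  by_cases h : (∑ i, δ i) = n
  · rw [if_pos (hmem.mpr h), if_pos h]
  · rw [if_neg (fun hc => h (hmem.mp hc)), if_neg h]


lemma coeff_truncExp (z : Fin s → ℝ) (m : ℕ) (δ : Fin s →₀ ℕ) :
    MvPolynomial.coeff δ (truncExp m z)
      = if (∑ i, δ i) ≤ m then (Nat.multinomial Finset.univ ⇑δ : ℝ) * ∏ i, z i ^ δ i else 0 := by
  rw [truncExp, MvPolynomial.coeff_sum]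
  simp only [coeff_linpow]
  rw [Finset.sum_ite_eq (Finset.range (m+1)) (∑ i, δ i)
    (fun _ => (Nat.multinomial Finset.univ ⇑δ : ℝ) * ∏ i, z i ^ δ i)]
  simp [Nat.lt_succ_iff]

lemma eval_monomial' (x : Fin s → ℝ) (δ : Fin s →₀ ℕ) (c : ℝ) :
    MvPolynomial.eval x (MvPolynomial.monomial δ c) = c * ∏ i, x i ^ δ i := by
  rw [MvPolynomial.eval_monomial]
  congr 1
  exact Finsupp.prod_fintype _ _ fun i => pow_zero _

section WithS

variable (S : Set (Fin s → ℝ)) [Fintype S]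

/-- evaluation at the points of `S`, as a linear map -/
def evS : MvPolynomial (Fin s) ℝ →ₗ[ℝ] (S → ℝ) :=
  LinearMap.pi fun z => (MvPolynomial.aeval (R := ℝ) z.1).toLinearMap

lemma evS_apply (f : MvPolynomial (Fin s) ℝ) (z : S) :
    evS S f z = MvPolynomial.eval z.1 f := by
  rfl

lemma evS_eq_iff (f g : MvPolynomial (Fin s) ℝ) :
    evS S f = evS S g ↔ ∀ z ∈ S, MvPolynomial.eval z f = MvPolynomial.eval z g := by
  constructor
  · intro h z hz
    have := congrFun h ⟨z, hz⟩
    simpa [evS_apply] using this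
  · intro h
    funext z
    simp only [evS_apply]
    exact h z.1 z.2

/-- the image of the degree-≤-m polynomials under evaluation -/
def V (m : ℕ) : Submodule ℝ (S → ℝ) :=
  (MvPolynomial.restrictTotalDegree (Fin s) ℝ m).map (evS S)

lemma restrictTotalDegree_mono {m m' : ℕ} (h : m ≤ m') :
    MvPolynomial.restrictTotalDegree (Fin s) ℝ m ≤ MvPolynomial.restrictTotalDegree (Fin s) ℝ m' := by
  intro f hf
  rw [MvPolynomial.mem_restrictTotalDegree] at hf ⊢
  exact hf.trans h

lemma V_mono {m m' : ℕ} (h : m ≤ m') : V S m ≤ V S m' :=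
  Submodule.map_mono (restrictTotalDegree_mono h)

/-- key equivalence: vanishing of the combination of truncated exponentials
equals the vanishing of all moments of degree ≤ m -/
lemma sum_truncExp_eq_zero_iff (a : S → ℝ) (m : ℕ) :
    (∑ z : S, a z • truncExp m z.1 = 0) ↔
      ∀ f : MvPolynomial (Fin s) ℝ, f.totalDegree ≤ m →
        ∑ z : S, a z * MvPolynomial.eval z.1 f = 0 := by
  have hmoment : (∑ z : S, a z • truncExp m z.1 = 0) ↔
      ∀ δ : Fin s →₀ ℕ, (∑ i, δ i) ≤ m → ∑ z : S, a z * ∏ i, z.1 i ^ δ i = 0 := by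
    constructor
    · intro h δ hδ
      have h0 := congrArg (MvPolynomial.coeff δ) h
      rw [MvPolynomial.coeff_zero] at h0
      rw [show MvPolynomial.coeff δ (∑ z : S, a z • truncExp m z.1)
          = ∑ z : S, a z * MvPolynomial.coeff δ (truncExp m z.1) by
        rw [MvPolynomial.coeff_sum]; simp [MvPolynomial.coeff_smul, smul_eq_mul]] at h0
      simp only [coeff_truncExp, if_pos hδ] at h0
      have hmult : ((Nat.multinomial Finset.univ ⇑δ : ℕ) : ℝ) ≠ 0 := by
        exact_mod_cast (Nat.multinomial_pos _ _).ne'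
      have : (Nat.multinomial Finset.univ ⇑δ : ℝ) * ∑ z : S, a z * ∏ i, z.1 i ^ δ i = 0 := by
        rw [Finset.mul_sum]
        rw [← h0]
        congr 1; funext z; ring
      rcases mul_eq_zero.mp this with h' | h'
      · exact absurd h' hmult
      · exact h'
    · intro h
      apply MvPolynomial.ext
      intro δ
      rw [MvPolynomial.coeff_zero]
      rw [show MvPolynomial.coeff δ (∑ z : S, a z • truncExp m z.1)
          = ∑ z : S, a z * MvPolynomial.coeff δ (truncExp m z.1) by
        rw [MvPolynomial.coeff_sum]; simp [MvPolynomial.coeff_smul, smul_eq_mul]]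
      simp only [coeff_truncExp]
      by_cases hδ : (∑ i, δ i) ≤ m
      · simp only [if_pos hδ]
        have := h δ hδ
        rw [show ∑ z : S, a z * ((Nat.multinomial Finset.univ ⇑δ : ℝ) * ∏ i, z.1 i ^ δ i)
            = (Nat.multinomial Finset.univ ⇑δ : ℝ) * ∑ z : S, a z * ∏ i, z.1 i ^ δ i by
          rw [Finset.mul_sum]; congr 1; funext z; ring]
        rw [this, mul_zero]
      · simp [if_neg hδ]
  rw [hmoment]
  constructor
  · intro h f hf
    have heval : ∀ z : S, MvPolynomial.eval z.1 f
        = ∑ δ ∈ f.support, MvPolynomial.eval z.1 (MvPolynomial.monomial δ (MvPolynomial.coeff δ f)) := by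
      intro z
      conv_lhs => rw [f.as_sum]
      rw [map_sum]
    simp only [heval]
    rw [show (∑ z : S, a z * ∑ δ ∈ f.support, MvPolynomial.eval z.1 (MvPolynomial.monomial δ (MvPolynomial.coeff δ f)))
        = ∑ δ ∈ f.support, MvPolynomial.coeff δ f * ∑ z : S, a z * ∏ i, z.1 i ^ δ i by
      simp only [Finset.mul_sum]
      rw [Finset.sum_comm]
      refine Finset.sum_congr rfl fun δ _ => ?_
      refine Finset.sum_congr rfl fun z _ => ?_
      rw [eval_monomial']; ring]
    refine Finset.sum_eq_zero fun δ hδ => ?_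
    rw [h δ ?_, mul_zero]
    rw [← finsupp_sum_eq]
    exact le_trans (MvPolynomial.le_totalDegree hδ) hf
  · intro h δ hδ
    have := h (MvPolynomial.monomial δ 1) ?_
    · simpa [eval_monomial'] using this
    · rw [MvPolynomial.totalDegree_monomial _ (one_ne_zero), finsupp_sum_eq]
      exact hδ

/-- linear independence of truncated exponentials ↔ moment nondegeneracy -/
lemma linIndep_iff (m : ℕ) :
    (LinearIndependent ℝ fun z : S => truncExp m z.1) ↔
      ∀ a : S → ℝ, (∀ f : MvPolynomial (Fin s) ℝ, f.totalDegree ≤ m →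
        ∑ z : S, a z * MvPolynomial.eval z.1 f = 0) → a = 0 := by
  rw [Fintype.linearIndependent_iff]
  constructor
  · intro h a ha
    funext z
    exact h a ((sum_truncExp_eq_zero_iff S a m).mpr ha) z
  · intro h a ha z
    have := h a ((sum_truncExp_eq_zero_iff S a m).mp ha)
    exact congrFun this z

/-- moment nondegeneracy ↔ surjectivity of evaluation on degree ≤ m -/
lemma ind_iff_sur (m : ℕ) :
    (∀ a : S → ℝ, (∀ f : MvPolynomial (Fin s) ℝ, f.totalDegree ≤ m →
        ∑ z : S, a z * MvPolynomial.eval z.1 f = 0) → a = 0) ↔ V S m = ⊤ := by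
  constructor
  · intro hind
    by_contra hne
    obtain ⟨φ, hφne, hφ⟩ := Submodule.exists_dual_map_eq_bot_of_lt_top
      (lt_top_iff_ne_top.mpr hne) inferInstance
    set a : S → ℝ := fun z => φ (Pi.single z 1) with ha
    have key : ∀ v : S → ℝ, φ v = ∑ z : S, v z * a z := by
      intro v
      conv_lhs => rw [show v = ∑ z : S, Pi.single z (v z) from (Finset.univ_sum_single v).symm]
      rw [map_sum]
      refine Finset.sum_congr rfl fun z _ => ?_
      rw [show Pi.single z (v z) = (v z) • (Pi.single z (1:ℝ) : S → ℝ) by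
        funext w; simp [Pi.single_apply, mul_ite]]
      rw [map_smul]; simp [ha, smul_eq_mul]
    have hzero : a = 0 := by
      apply hind
      intro f hf
      have hmem : evS S f ∈ V S m :=
        ⟨f, (MvPolynomial.mem_restrictTotalDegree _ _ _).mpr hf, rfl⟩
      have : φ (evS S f) = 0 := by
        have : φ (evS S f) ∈ (V S m).map φ := ⟨evS S f, hmem, rfl⟩
        rw [hφ] at this
        simpa using this
      rw [key] at this
      rw [← this]
      refine Finset.sum_congr rfl fun z _ => ?_
      rw [evS_apply]; ring
    apply hφne
    apply LinearMap.ext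
    intro v
    rw [key, hzero]
    simp
  · intro htop a ha
    funext z0
    have hmem : (Pi.single z0 (1:ℝ) : S → ℝ) ∈ V S m := htop ▸ Submodule.mem_top
    obtain ⟨f, hf, hev⟩ := hmem
    have hf' : f.totalDegree ≤ m := by
      simpa [MvPolynomial.mem_restrictTotalDegree] using hf
    have hvals : ∀ z : S, MvPolynomial.eval z.1 f = (Pi.single z0 (1:ℝ) : S → ℝ) z := by
      intro z; rw [← evS_apply, hev]
    have hsum : ∑ z : S, a z * MvPolynomial.eval z.1 f = a z0 := by
      rw [Finset.sum_eq_single z0]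
      · rw [hvals z0]; simp [Pi.single_apply]
      · intro b _ hb; rw [hvals b]; simp [Pi.single_apply, hb]
      · intro h; exact absurd (Finset.mem_univ z0) h
    have h0 := ha f hf'
    rw [hsum] at h0
    simp [h0]

/-- evaluation is surjective for large degree -/
lemma exists_sur : ∃ m : ℕ, V S m = ⊤ := by
  classical
  -- separating polynomials
  set ℓ : S → S → MvPolynomial (Fin s) ℝ := fun z0 w =>
    (∑ i, MvPolynomial.C (z0.1 i - w.1 i) * MvPolynomial.X i)
      - MvPolynomial.C (∑ i, (z0.1 i - w.1 i) * w.1 i) with hℓ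
  have hevalℓ : ∀ z0 w : S, ∀ x : Fin s → ℝ,
      MvPolynomial.eval x (ℓ z0 w) = (∑ i, (z0.1 i - w.1 i) * x i) - ∑ i, (z0.1 i - w.1 i) * w.1 i := by
    intro z0 w x
    simp [hℓ]
  set f : S → MvPolynomial (Fin s) ℝ := fun z0 => ∏ w ∈ Finset.univ.erase z0, ℓ z0 w with hf
  have hfz0 : ∀ z0 : S, 0 < MvPolynomial.eval z0.1 (f z0) := by
    intro z0
    rw [hf]
    simp only [map_prod]
    refine Finset.prod_pos fun w hw => ?_
    rw [hevalℓ]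
    have : (∑ i, (z0.1 i - w.1 i) * z0.1 i) - ∑ i, (z0.1 i - w.1 i) * w.1 i
        = ∑ i, (z0.1 i - w.1 i)^2 := by
      rw [← Finset.sum_sub_distrib]
      refine Finset.sum_congr rfl fun i _ => by ring
    rw [this]
    have hne : w.1 ≠ z0.1 := fun hc => (Finset.mem_erase.mp hw).1 (Subtype.ext hc)
    obtain ⟨i, hi⟩ := Function.ne_iff.mp hne
    refine Finset.sum_pos' (fun i _ => sq_nonneg _) ⟨i, Finset.mem_univ i, ?_⟩
    have : z0.1 i - w.1 i ≠ 0 := sub_ne_zero.mpr (Ne.symm hi)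
    positivity
  have hfw : ∀ z0 w : S, w ≠ z0 → MvPolynomial.eval w.1 (f z0) = 0 := by
    intro z0 w hwz
    rw [hf]
    simp only [map_prod]
    refine Finset.prod_eq_zero (Finset.mem_erase.mpr ⟨hwz, Finset.mem_univ w⟩) ?_
    rw [hevalℓ]
    ring
  refine ⟨Finset.univ.sup fun z0 : S => (f z0).totalDegree, ?_⟩
  rw [eq_top_iff]
  intro v _
  refine ⟨∑ z0 : S, (v z0 * (MvPolynomial.eval z0.1 (f z0))⁻¹) • f z0, ?_, ?_⟩
  · simp only [SetLike.mem_coe, MvPolynomial.mem_restrictTotalDegree]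
    refine le_trans (MvPolynomial.totalDegree_finset_sum _ _) (Finset.sup_le fun z0 _ => ?_)
    exact le_trans (MvPolynomial.totalDegree_smul_le _ _) (Finset.le_sup (f := fun z0 : S => (f z0).totalDegree) (Finset.mem_univ z0))
  · funext z
    rw [map_sum]
    simp only [map_smul, Finset.sum_apply, Pi.smul_apply, smul_eq_mul]
    rw [Finset.sum_eq_single z]
    · rw [evS_apply]
      field_simp [(hfz0 z).ne']
    · intro b _ hb
      rw [evS_apply, hfw b z (fun hc => hb hc.symm)]
      ring
    · intro h; exact absurd (Finset.mem_univ z) h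

lemma step (k : ℕ) (Lp : Submodule ℝ (MvPolynomial (Fin s) ℝ))
    (hLp : Lp ≤ MvPolynomial.restrictTotalDegree (Fin s) ℝ k)
    (hinj : ∀ x ∈ Lp, evS S x = 0 → x = 0) :
    ∃ L : Submodule ℝ (MvPolynomial (Fin s) ℝ),
      Lp ≤ L ∧ L ≤ MvPolynomial.restrictTotalDegree (Fin s) ℝ k ∧
      (∀ x ∈ L, evS S x = 0 → x = 0) ∧ V S k ≤ L.map (evS S) := by
  classical
  set Vp := Lp.map (evS S) with hVpdef
  have hVp : Vp ≤ V S k := Submodule.map_mono hLp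
  obtain ⟨Cc, hC⟩ := Submodule.exists_isCompl Vp
  set W := Cc ⊓ V S k with hWdef
  have hdisj : ∀ v, v ∈ Vp → v ∈ W → v = 0 := by
    intro v hv hw
    have hm : v ∈ Vp ⊓ Cc := ⟨hv, hw.1⟩
    rw [hC.inf_eq_bot] at hm
    simpa using hm
  have hsup : Vp ⊔ W = V S k := by
    rw [hWdef, ← sup_inf_assoc_of_le Cc hVp, hC.sup_eq_top, top_inf_eq]
  set ek : (MvPolynomial.restrictTotalDegree (Fin s) ℝ k) →ₗ[ℝ] (S → ℝ) :=
    (evS S).comp (Submodule.subtype _) with hek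
  have hrange : LinearMap.range ek = V S k := by
    rw [hek, LinearMap.range_comp, Submodule.range_subtype]
    rfl
  obtain ⟨σm, hσm⟩ := (LinearMap.rangeRestrict ek).exists_rightInverse_of_surjective
    (LinearMap.range_eq_top.mpr (LinearMap.surjective_rangeRestrict ek))
  set lift : (LinearMap.range ek) →ₗ[ℝ] MvPolynomial (Fin s) ℝ :=
    (Submodule.subtype _).comp σm with hlift
  have hlift_mem : ∀ v, lift v ∈ MvPolynomial.restrictTotalDegree (Fin s) ℝ k :=
    fun v => (σm v).2
  have hlift_ev : ∀ v : LinearMap.range ek, evS S (lift v) = v.1 := by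
    intro v
    have h1 := DFunLike.congr_fun hσm v
    have h2 : ek (σm v) = v.1 := congrArg Subtype.val h1
    simpa [hek, hlift] using h2
  set W' : Submodule ℝ (LinearMap.range ek) := W.comap (Submodule.subtype _) with hW'
  refine ⟨Lp ⊔ W'.map lift, le_sup_left, ?_, ?_, ?_⟩
  · refine sup_le hLp ?_
    rintro x hx
    obtain ⟨w, hw, rfl⟩ := Submodule.mem_map.mp hx
    exact hlift_mem w
  · -- injectivity
    intro x hx hev0
    obtain ⟨y, hy, zz, hz, rfl⟩ := Submodule.mem_sup.mp hx
    obtain ⟨w, hw, rfl⟩ := Submodule.mem_map.mp hz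
    have hwW : (w : S → ℝ) ∈ W := hw
    have hevy : evS S y ∈ Vp := ⟨y, hy, rfl⟩
    have hadd : evS S y + (w : S → ℝ) = 0 := by
      rw [map_add] at hev0
      rwa [hlift_ev w] at hev0
    have hwVp : (w : S → ℝ) ∈ Vp := by
      have : (w : S → ℝ) = -(evS S y) := by linear_combination hadd
      rw [this]
      exact Submodule.neg_mem _ hevy
    have hw0 : (w : S → ℝ) = 0 := hdisj _ hwVp hwW
    have hw0' : w = 0 := by
      apply Subtype.ext
      exact hw0
    have hy0 : y = 0 := by
      apply hinj y hy
      have : evS S y = 0 := by rw [← hadd, hw0, add_zero]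
      exact this
    rw [hy0, hw0', map_zero, add_zero]
  · -- surjectivity onto V S k
    rw [← hsup, Submodule.map_sup]
    have hmapW : (W'.map lift).map (evS S) = W := by
      apply le_antisymm
      · rintro x hx
        obtain ⟨p, hp, rfl⟩ := Submodule.mem_map.mp hx
        obtain ⟨w, hw, rfl⟩ := Submodule.mem_map.mp hp
        rw [hlift_ev w]
        exact hw
      · intro x hx
        have hxk : x ∈ LinearMap.range ek := by rw [hrange]; exact hx.2
        refine ⟨lift ⟨x, hxk⟩, ⟨⟨x, hxk⟩, hx, rfl⟩, hlift_ev ⟨x, hxk⟩⟩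
    rw [hmapW]


lemma exists_good (k : ℕ) :
    ∃ L : Submodule ℝ (MvPolynomial (Fin s) ℝ),
      L ≤ MvPolynomial.restrictTotalDegree (Fin s) ℝ k ∧
      (∀ x ∈ L, evS S x = 0 → x = 0) ∧
      ∀ j ≤ k, V S j ≤ ((L ⊓ MvPolynomial.restrictTotalDegree (Fin s) ℝ j).map (evS S)) := by
  induction k with
  | zero =>
    obtain ⟨L, _, hle, hinj, hmap⟩ := step S 0 ⊥ bot_le (by simp)
    refine ⟨L, hle, hinj, ?_⟩
    intro j hj
    interval_cases j
    rwa [inf_eq_left.mpr hle]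
  | succ k ih =>
    obtain ⟨L, hle, hinj, hmap⟩ := ih
    obtain ⟨L', hLL', hle', hinj', hmap'⟩ :=
      step S (k+1) L (hle.trans (restrictTotalDegree_mono (Nat.le_succ k))) hinj
    refine ⟨L', hle', hinj', ?_⟩
    intro j hj
    by_cases hjk : j ≤ k
    · exact (hmap j hjk).trans (Submodule.map_mono (inf_le_inf_right _ hLL'))
    · have hj1 : j = k+1 := le_antisymm hj (not_le.mp hjk)
      subst hj1
      rwa [inf_eq_left.mpr hle']


end WithS

end MuAux
-- (appended after MuAux)

/-- `L` is an interpolation space with respect to `S ⊆ ℝ^s`. -/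
def IsInterpSpace {s : ℕ} (S : Set (Fin s → ℝ)) (L : Submodule ℝ (MvPolynomial (Fin s) ℝ)) :
    Prop :=
  ∀ f : MvPolynomial (Fin s) ℝ, ∃! g : MvPolynomial (Fin s) ℝ,
    g ∈ L ∧ ∀ z ∈ S, MvPolynomial.eval z g = MvPolynomial.eval z f

/-- `L` is a minimal degree interpolation space with respect to `S ⊆ ℝ^s`. -/
def IsMinDegInterpSpace {s : ℕ} (S : Set (Fin s → ℝ))
    (L : Submodule ℝ (MvPolynomial (Fin s) ℝ)) : Prop :=
  IsInterpSpace S L ∧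
    ∀ f g : MvPolynomial (Fin s) ℝ, g ∈ L →
      (∀ z ∈ S, MvPolynomial.eval z g = MvPolynomial.eval z f) →
      g.totalDegree ≤ f.totalDegree

/-- The maximal total degree occurring in a space of polynomials. -/
def degSup {s : ℕ} (L : Submodule ℝ (MvPolynomial (Fin s) ℝ)) : ℕ :=
  sSup (MvPolynomial.totalDegree '' (L : Set (MvPolynomial (Fin s) ℝ)))

/-- `μ(S)`: the maximal degree of a minimal degree interpolation space with respect to `S`. -/
def mu {s : ℕ} (S : Set (Fin s → ℝ)) : ℕ :=
  sSup (degSup '' {L | IsMinDegInterpSpace S L})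

theorem mu_eq_least_linearIndependent {s : ℕ} (S : Set (Fin s → ℝ)) (hS : S.Finite) :
    IsLeast {m : ℕ | LinearIndependent ℝ fun z : S =>
      ∑ k ∈ Finset.range (m + 1),
        (∑ i, MvPolynomial.C (z.1 i) * MvPolynomial.X i : MvPolynomial (Fin s) ℝ) ^ k}
      (mu S) := by
  classical
  haveI : Fintype S := hS.fintype
  have hex : ∃ m, MuAux.V S m = ⊤ := MuAux.exists_sur S
  set N := Nat.find hex with hNdef
  have hNtop : MuAux.V S N = ⊤ := Nat.find_spec hex
  have hset : ∀ m : ℕ, (LinearIndependent ℝ fun z : S => MuAux.truncExp m z.1) ↔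
      MuAux.V S m = ⊤ :=
    fun m => (MuAux.linIndep_iff S m).trans (MuAux.ind_iff_sur S m)
  obtain ⟨L, hLle, hLinj, hLmap⟩ := MuAux.exists_good S N
  -- surjectivity of evS on L with degree control
  have hsurL : ∀ v : S → ℝ, ∃ g, g ∈ L ∧ g.totalDegree ≤ N ∧ MuAux.evS S g = v := by
    intro v
    have hv : v ∈ MuAux.V S N := hNtop ▸ Submodule.mem_top
    obtain ⟨g, hg, hgev⟩ := (hLmap N le_rfl) hv
    exact ⟨g, hg.1, by
      have h2 := hg.2
      simpa [MvPolynomial.mem_restrictTotalDegree] using h2, hgev⟩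
  have huniq : ∀ g1 g2, g1 ∈ L → g2 ∈ L → MuAux.evS S g1 = MuAux.evS S g2 → g1 = g2 := by
    intro g1 g2 h1 h2 hev
    have : g1 - g2 = 0 := hLinj _ (L.sub_mem h1 h2) (by rw [map_sub, hev, sub_self])
    exact sub_eq_zero.mp this
  have hdegL : ∀ g ∈ L, g.totalDegree ≤ N := by
    intro g hg
    obtain ⟨g', hg', hdeg', hev'⟩ := hsurL (MuAux.evS S g)
    rw [huniq g g' hg hg' hev'.symm]
    exact hdeg'
  have hinterp : IsInterpSpace S L := by
    intro f
    obtain ⟨g, hgL, hgdeg, hgev⟩ := hsurL (MuAux.evS S f)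
    refine ⟨g, ⟨hgL, (MuAux.evS_eq_iff S g f).mp hgev⟩, ?_⟩
    rintro y ⟨hyL, hymatch⟩
    exact huniq y g hyL hgL (((MuAux.evS_eq_iff S y f).mpr hymatch).trans hgev.symm)
  have hmindeg : ∀ f g : MvPolynomial (Fin s) ℝ, g ∈ L →
      (∀ z ∈ S, MvPolynomial.eval z g = MvPolynomial.eval z f) →
      g.totalDegree ≤ f.totalDegree := by
    intro f g hg hmatch
    have hev : MuAux.evS S g = MuAux.evS S f := (MuAux.evS_eq_iff S g f).mpr hmatch
    rcases le_total f.totalDegree N with h | h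
    · have hvf : MuAux.evS S f ∈ MuAux.V S f.totalDegree :=
        ⟨f, (MvPolynomial.mem_restrictTotalDegree _ _ _).mpr le_rfl, rfl⟩
      obtain ⟨g', hg', hev'⟩ := (hLmap f.totalDegree h) hvf
      have : g = g' := huniq g g' hg hg'.1 (by rw [hev, hev'])
      rw [this]
      have h2 := hg'.2
      simpa [MvPolynomial.mem_restrictTotalDegree] using h2
    · exact (hdegL g hg).trans h
  have hLmem : IsMinDegInterpSpace S L := ⟨hinterp, hmindeg⟩
  -- an element of L of degree exactly N
  have hexact : ∃ g ∈ L, g.totalDegree = N := by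
    by_cases hN0 : N = 0
    · exact ⟨0, L.zero_mem, by simp [hN0]⟩
    · have hlt : N - 1 < N := Nat.sub_lt (Nat.pos_of_ne_zero hN0) one_pos
      have hVn : ¬ (MuAux.V S (N-1) = ⊤) := Nat.find_min hex hlt
      obtain ⟨v, hv⟩ : ∃ v, v ∉ MuAux.V S (N-1) := by
        by_contra h
        push_neg at h
        exact hVn (eq_top_iff.mpr fun x _ => h x)
      obtain ⟨g, hgL, hgdeg, hgev⟩ := hsurL v
      refine ⟨g, hgL, le_antisymm hgdeg ?_⟩
      by_contra hgt
      push_neg at hgt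
      have hle' : g.totalDegree ≤ N - 1 := Nat.le_sub_one_of_lt hgt
      exact hv ⟨g, (MvPolynomial.mem_restrictTotalDegree _ _ _).mpr hle', hgev⟩
  have hdegSupL : degSup L = N := by
    obtain ⟨g, hgL, hgdeg⟩ := hexact
    apply le_antisymm
    · refine csSup_le ⟨0, ⟨0, L.zero_mem, MvPolynomial.totalDegree_zero⟩⟩ ?_
      rintro y ⟨x, hx, rfl⟩
      exact hdegL x hx
    · refine le_csSup ⟨N, ?_⟩ ⟨g, hgL, hgdeg⟩
      rintro y ⟨x, hx, rfl⟩
      exact hdegL x hx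
  have hother : ∀ L' : Submodule ℝ (MvPolynomial (Fin s) ℝ),
      IsMinDegInterpSpace S L' → degSup L' ≤ N := by
    rintro L' ⟨_, hmin⟩
    refine csSup_le ⟨0, ⟨0, L'.zero_mem, MvPolynomial.totalDegree_zero⟩⟩ ?_
    rintro y ⟨x, hx, rfl⟩
    have hv : MuAux.evS S x ∈ MuAux.V S N := hNtop ▸ Submodule.mem_top
    obtain ⟨f, hf, hfev⟩ := hv
    have hfdeg : f.totalDegree ≤ N := by
      simpa [MvPolynomial.mem_restrictTotalDegree] using hf
    refine le_trans (hmin f x hx ?_) hfdeg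
    exact (MuAux.evS_eq_iff S x f).mp hfev.symm
  have hmu : mu S = N := by
    apply le_antisymm
    · refine csSup_le ⟨N, ⟨L, hLmem, hdegSupL⟩⟩ ?_
      rintro y ⟨L', hL', rfl⟩
      exact hother L' hL'
    · refine le_csSup ⟨N, ?_⟩ ⟨L, hLmem, hdegSupL⟩
      rintro y ⟨L', hL', rfl⟩
      exact hother L' hL'
  constructor
  · show LinearIndependent ℝ _
    rw [hmu]
    exact (hset N).mpr hNtop
  · intro m hm
    rw [hmu]
    exact Nat.find_min' hex ((hset m).mp hm)
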